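/- Let f satisfy h1, h2 and, for given 0 ≤ p ≤ 1, assume h3: t ↦ (f(t)/f'(t) − t)/t^{p+1} is strictly increasing on (0,ν). Then the sequence t_0 ∈ (0,ρ), t_{k+1} = |n_f(t_k)| has the property that {t_{k+1}/t_k^{p+1}} is strictly decreasing. -/

import Mathlib

theorem stmt6 (R : ℝ) (hR : 0 < R) (f f' : ℝ → ℝ)
    (hderiv : ∀ t ∈ Set.Ico (0:ℝ) R, HasDerivWithinAt f (f' t) (Set.Ico 0 R) t)
    (hcont : ContinuousOn f' (Set.Ico 0 R))
    (hf0 : f 0 = 0) (hf'0 : f' 0 = -1)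
    (hmono : StrictMonoOn f' (Set.Ico 0 R))
    (ν ρ : ℝ) (hν : ν = sSup {t ∈ Set.Ico 0 R | f' t < 0})
    (hρ : ρ = sSup {δ : ℝ | δ ∈ Set.Ioo 0 ν ∧ ∀ t ∈ Set.Ioo 0 δ, (f t / f' t - t) / t < 1})
    (p : ℝ) (hp0 : 0 ≤ p) (hp1 : p ≤ 1)
    (h3 : StrictMonoOn (fun t => (f t / f' t - t) / t ^ (p + 1)) (Set.Ioo 0 ν))
    (t : ℕ → ℝ) (ht0 : t 0 ∈ Set.Ioo 0 ρ)
    (hrec : ∀ k, t (k + 1) = |t k - f (t k) / f' (t k)|) :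
    StrictAnti (fun k => t (k + 1) / t k ^ (p + 1)) := by
  set S : Set ℝ := {t ∈ Set.Ico 0 R | f' t < 0} with hS
  have hSne : S.Nonempty := ⟨0, ⟨le_refl 0, hR⟩, by rw [hf'0]; norm_num⟩
  have hSbdd : BddAbove S := ⟨R, fun x hx => le_of_lt hx.1.2⟩
  -- basic facts on (0, ν)
  have hbase : ∀ x ∈ Set.Ioo (0:ℝ) ν, f' x < 0 ∧ x < R := by
    intro x hx
    obtain ⟨s, hsS, hxs⟩ := exists_lt_of_lt_csSup hSne (hν ▸ hx.2)
    have hxR : x < R := lt_trans hxs hsS.1.2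
    refine ⟨lt_trans (hmono ⟨le_of_lt hx.1, hxR⟩ hsS.1 hxs) hsS.2, hxR⟩
  have hfc : ContinuousOn f (Set.Ico 0 R) := fun x hx =>
    (hderiv x hx).continuousWithinAt
  -- key inequality : f x < x * f' x on (0, ν)
  have hkey : ∀ x ∈ Set.Ioo (0:ℝ) ν, x < f x / f' x := by
    intro x hx
    obtain ⟨hf'neg, hxR⟩ := hbase x hx
    have hsub : Set.Icc (0:ℝ) x ⊆ Set.Ico 0 R := fun s hs =>
      ⟨hs.1, lt_of_le_of_lt hs.2 hxR⟩
    set φ : ℝ → ℝ := fun s => f s - s * f' x with hφ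
    have hφc : ContinuousOn φ (Set.Icc 0 x) :=
      (hfc.mono hsub).sub (continuousOn_id.mul continuousOn_const)
    have hφanti : StrictAntiOn φ (Set.Icc 0 x) := by
      apply strictAntiOn_of_deriv_neg (convex_Icc 0 x) hφc
      intro s hs
      rw [interior_Icc] at hs
      have hsR : s ∈ Set.Ico (0:ℝ) R := ⟨le_of_lt hs.1, lt_trans hs.2 hxR⟩
      have hdf : HasDerivAt f (f' s) s :=
        (hderiv s hsR).hasDerivAt (Ico_mem_nhds hs.1 hsR.2)
      have hdφ : HasDerivAt φ (f' s - f' x) s := by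
        have := hdf.sub ((hasDerivAt_id s).mul_const (f' x))
        exact this.congr_deriv (by ring)
      rw [hdφ.deriv]
      have := hmono hsR ⟨le_of_lt hx.1, hxR⟩ hs.2
      linarith
    have := hφanti ⟨le_refl 0, le_of_lt hx.1⟩ ⟨le_of_lt hx.1, le_refl x⟩ hx.1
    have hlt : f x < x * f' x := by
      simp only [hφ, hf0] at this; linarith
    rwa [lt_div_iff_of_neg hf'neg]
  -- facts on (0, ρ)
  set D : Set ℝ := {δ : ℝ | δ ∈ Set.Ioo 0 ν ∧ ∀ t ∈ Set.Ioo 0 δ, (f t / f' t - t) / t < 1}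
    with hD
  have hDne : D.Nonempty := by
    by_contra h
    rw [Set.not_nonempty_iff_eq_empty] at h
    rw [h, Real.sSup_empty] at hρ
    have := ht0.2
    rw [hρ] at this
    linarith [ht0.1]
  have hDbdd : BddAbove D := ⟨ν, fun δ hδ => le_of_lt hδ.1.2⟩
  have hmemρ : ∀ x ∈ Set.Ioo (0:ℝ) ρ, x ∈ Set.Ioo 0 ν ∧ (f x / f' x - x) / x < 1 := by
    intro x hx
    obtain ⟨δ, hδD, hxδ⟩ := exists_lt_of_lt_csSup hDne (hρ ▸ hx.2)
    exact ⟨⟨hx.1, lt_trans hxδ hδD.1.2⟩, hδD.2 x ⟨hx.1, hxδ⟩⟩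
  -- one step of the iteration
  have hstep : ∀ x ∈ Set.Ioo (0:ℝ) ρ,
      |x - f x / f' x| = f x / f' x - x ∧ 0 < f x / f' x - x ∧ f x / f' x - x < x := by
    intro x hx
    obtain ⟨hxν, hratio⟩ := hmemρ x hx
    have h1 : x < f x / f' x := hkey x hxν
    have h2 : f x / f' x - x < x := by
      rwa [div_lt_one hx.1] at hratio
    exact ⟨by rw [abs_of_nonpos (by linarith), neg_sub], by linarith, h2⟩
  -- invariance
  have hinv : ∀ k, t k ∈ Set.Ioo 0 ρ := by
    intro k
    induction k with
    | zero => exact ht0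
    | succ n ih =>
      obtain ⟨habs, hpos, hlt⟩ := hstep (t n) ih
      rw [hrec n, habs]
      exact ⟨hpos, lt_trans hlt ih.2⟩
  have hdec : ∀ k, t (k + 1) < t k := by
    intro k
    obtain ⟨habs, _, hlt⟩ := hstep (t k) (hinv k)
    rw [hrec k, habs]; exact hlt
  have hanti : StrictAnti t := strictAnti_nat_of_succ_lt hdec
  have heq : ∀ k, t (k + 1) / t k ^ (p + 1) =
      (f (t k) / f' (t k) - t k) / t k ^ (p + 1) := by
    intro k
    obtain ⟨habs, _, _⟩ := hstep (t k) (hinv k)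
    rw [hrec k, habs]
  intro k l hkl
  simp only [heq]
  exact h3 (hmemρ (t l) (hinv l)).1 (hmemρ (t k) (hinv k)).1 (hanti hkl)
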